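/- Let β, r, θ, c > 0 with β > r, and suppose either (0 < c ≤ 1/3 and β c ≥ β - 2r) or (c > 1/3 and c ≥ β²/(27 r²)). If 0 < θ < (β - r)(1 + c), then the equation (β u - r)(1 + c u²)/u² = θ has exactly one solution u in the open interval (0,1); consequently the map V₂ has a unique positive fixed point (u, 1-u). -/

import Mathlib

/-- The map `V₂(u,v) = (u(2-u) - u v, β u v + (1-r) v - θ u² v/(1 + c u²))`
(Holling type III toxin distribution). -/
noncomputable def V2 (β r θ c : ℝ) (p : ℝ × ℝ) : ℝ × ℝ :=
  (p.1 * (2 - p.1) - p.1 * p.2,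
   β * p.1 * p.2 + (1 - r) * p.2 - θ * p.1 ^ 2 * p.2 / (1 + c * p.1 ^ 2))

/-- `Ψ₂(u) = (βu - r)(1 + cu²)/u²`. -/
noncomputable def Psi2 (β r c u : ℝ) : ℝ := (β * u - r) * (1 + c * u ^ 2) / u ^ 2

lemma gnn_aux (β r c u : ℝ) (hβ : 0 < β) (hr : 0 < r) (hc : 0 < c)
    (hcase : (c ≤ 1 / 3 ∧ β - 2 * r ≤ β * c) ∨
      (1 / 3 < c ∧ β ^ 2 / (27 * r ^ 2) ≤ c))
    (hu : 0 ≤ u) (hu1 : u ≤ 1) : 0 ≤ c * β * u ^ 3 - β * u + 2 * r := by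
  rcases hcase with ⟨hc3, hbc⟩ | ⟨hc3, hbc⟩
  · have hu2 : u ^ 2 ≤ 1 := by nlinarith
    have hA : 0 ≤ (1 - u) * (1 - c * (u ^ 2 + u + 1)) := by
      apply mul_nonneg (by linarith)
      nlinarith
    nlinarith [mul_nonneg hβ.le hA]
  · have h27 : β ^ 2 ≤ 27 * r ^ 2 * c := by
      rw [div_le_iff₀ (by positivity)] at hbc
      linarith
    nlinarith [mul_nonneg (sq_nonneg (β * u - 3 * r)) (by positivity : (0:ℝ) ≤ β * u + 6 * r),
      mul_nonneg (mul_nonneg hβ.le (pow_nonneg hu 3)) (sub_nonneg.2 h27),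
      mul_pos hr hr]

lemma smono_aux (β r c : ℝ) (hβ : 0 < β) (hr : 0 < r) (hc : 0 < c)
    (hcase : (c ≤ 1 / 3 ∧ β - 2 * r ≤ β * c) ∨
      (1 / 3 < c ∧ β ^ 2 / (27 * r ^ 2) ≤ c))
    {a b : ℝ} (ha : 0 < a) (hab : a < b) (hb1 : b ≤ 1) :
    Psi2 β r c a < Psi2 β r c b := by
  have hb : 0 < b := ha.trans hab
  have hx2 : (Real.sqrt a) ^ 2 = a := Real.sq_sqrt ha.le
  have hy2 : (Real.sqrt b) ^ 2 = b := Real.sq_sqrt hb.le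
  set x := Real.sqrt a with hxdef
  set y := Real.sqrt b with hydef
  have hx : 0 < x := Real.sqrt_pos.2 ha
  have hy : 0 < y := Real.sqrt_pos.2 hb
  have hab1 : a * b ≤ 1 := by nlinarith
  have hxy2 : (x * y) ^ 2 = a * b := by rw [mul_pow, hx2, hy2]
  have hxy1 : x * y ≤ 1 := by nlinarith [sq_nonneg (x * y - 1)]
  have hg := gnn_aux β r c (x * y) hβ hr hc hcase (by positivity) hxy1
  have hxyne : x ≠ y := by
    intro h
    exact hab.ne (by rw [← hx2, ← hy2, h])
  have hsq : 0 < (x - y) ^ 2 :=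
    lt_of_le_of_ne (sq_nonneg _) (Ne.symm (pow_ne_zero 2 (sub_ne_zero.2 hxyne)))
  have key' : 0 < c * β * x ^ 2 * y ^ 2 * (x ^ 2 * y ^ 2) - β * (x ^ 2 * y ^ 2)
      + r * (x ^ 2 + y ^ 2) := by
    nlinarith [mul_nonneg (mul_pos hx hy).le hg, mul_pos hr hsq]
  have key : 0 < c * β * a ^ 2 * b ^ 2 - β * (a * b) + r * (a + b) := by
    rw [← hx2, ← hy2]
    nlinarith [key']
  have step : (β * a - r) * (1 + c * a ^ 2) * b ^ 2 < (β * b - r) * (1 + c * b ^ 2) * a ^ 2 := by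
    nlinarith [mul_pos (sub_pos.2 hab) key]
  unfold Psi2
  rw [div_lt_div_iff₀ (by positivity) (by positivity)]
  linarith [step]

/-- If `β > r`, either (`0 < c ≤ 1/3` and `βc ≥ β - 2r`) or (`c > 1/3` and
`c ≥ β²/(27r²)`), and `0 < θ < (β - r)(1 + c)`, then `Ψ₂(u) = θ` has exactly one
solution `u ∈ (0,1)`, and `V₂` has a unique positive fixed point, namely `(u, 1-u)`. -/
theorem unique_positive_fixed_point_V2 (β r θ c : ℝ) (hβ : 0 < β) (hr : 0 < r)
    (hθ : 0 < θ) (hc : 0 < c) (hβr : r < β)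
    (hcase : (c ≤ 1 / 3 ∧ β - 2 * r ≤ β * c) ∨
      (1 / 3 < c ∧ β ^ 2 / (27 * r ^ 2) ≤ c))
    (hθub : θ < (β - r) * (1 + c)) :
    (∃! u : ℝ, u ∈ Set.Ioo (0 : ℝ) 1 ∧ Psi2 β r c u = θ) ∧
    (∃! p : ℝ × ℝ, 0 < p.1 ∧ 0 < p.2 ∧ V2 β r θ c p = p) ∧
    (∀ u : ℝ, u ∈ Set.Ioo (0 : ℝ) 1 → Psi2 β r c u = θ →
      ∀ p : ℝ × ℝ, (0 < p.1 ∧ 0 < p.2 ∧ V2 β r θ c p = p) ↔ p = (u, 1 - u)) := by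
  have ha0 : 0 < r / β := div_pos hr hβ
  have ha1 : r / β < 1 := (div_lt_one hβ).2 hβr
  -- continuity
  have hcont : ContinuousOn (Psi2 β r c) (Set.Icc (r / β) 1) := by
    have hrepr : Psi2 β r c = fun u : ℝ => (β * u - r) * (1 + c * u ^ 2) / u ^ 2 := rfl
    rw [hrepr]
    apply ContinuousOn.div (by fun_prop) (by fun_prop)
    intro u hu
    have hu0 : 0 < u := lt_of_lt_of_le ha0 hu.1
    positivity
  have hPa : Psi2 β r c (r / β) = 0 := by
    unfold Psi2
    have h0 : β * (r / β) - r = 0 := by field_simp; ring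
    rw [h0, zero_mul, zero_div]
  have hP1 : Psi2 β r c 1 = (β - r) * (1 + c) := by unfold Psi2; norm_num
  -- existence of root
  obtain ⟨u₀, hu₀m, hu₀⟩ : ∃ u ∈ Set.Ioo (r / β) 1, Psi2 β r c u = θ := by
    have := intermediate_value_Ioo ha1.le hcont
    have hmem : θ ∈ Set.Ioo (Psi2 β r c (r / β)) (Psi2 β r c 1) := by
      rw [hPa, hP1]; exact ⟨hθ, hθub⟩
    obtain ⟨u, hu, hu'⟩ := this hmem
    exact ⟨u, hu, hu'⟩
  have hu₀01 : u₀ ∈ Set.Ioo (0 : ℝ) 1 := ⟨ha0.trans hu₀m.1, hu₀m.2⟩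
  -- uniqueness of root
  have uniq : ∀ u₁ ∈ Set.Ioo (0 : ℝ) 1, Psi2 β r c u₁ = θ →
      ∀ u₂ ∈ Set.Ioo (0 : ℝ) 1, Psi2 β r c u₂ = θ → u₁ = u₂ := by
    intro u₁ h₁ hP₁ u₂ h₂ hP₂
    rcases lt_trichotomy u₁ u₂ with h | h | h
    · exact absurd (hP₁.trans hP₂.symm)
        (smono_aux β r c hβ hr hc hcase h₁.1 h h₂.2.le).ne
    · exact h
    · exact absurd (hP₂.trans hP₁.symm)
        (smono_aux β r c hβ hr hc hcase h₂.1 h h₁.2.le).ne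
  -- fixed point characterization
  have key : ∀ u : ℝ, u ∈ Set.Ioo (0 : ℝ) 1 → Psi2 β r c u = θ →
      ∀ p : ℝ × ℝ, (0 < p.1 ∧ 0 < p.2 ∧ V2 β r θ c p = p) ↔ p = (u, 1 - u) := by
    intro u hu hΨ p
    have hu0 : 0 < u := hu.1
    have hu1 : u < 1 := hu.2
    have hEq : (β * u - r) * (1 + c * u ^ 2) = θ * u ^ 2 := by
      have := hΨ
      unfold Psi2 at this
      rw [div_eq_iff (by positivity : (u:ℝ) ^ 2 ≠ 0)] at this
      exact this
    constructor
    · rintro ⟨hp1, hp2, hfix⟩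
      have hD : (0:ℝ) < 1 + c * p.1 ^ 2 := by positivity
      have h1 : p.1 * (2 - p.1) - p.1 * p.2 = p.1 := congrArg Prod.fst hfix
      have h2 : β * p.1 * p.2 + (1 - r) * p.2 - θ * p.1 ^ 2 * p.2 / (1 + c * p.1 ^ 2) = p.2 :=
        congrArg Prod.snd hfix
      have hv0 : p.1 * (1 - p.1 - p.2) = 0 := by linear_combination h1
      have hv : p.2 = 1 - p.1 := by
        rcases mul_eq_zero.1 hv0 with h | h
        · exact absurd h hp1.ne'
        · linarith
      have hp1lt : p.1 < 1 := by rw [hv] at hp2; linarith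
      have h2' : θ * p.1 ^ 2 * p.2 / (1 + c * p.1 ^ 2)
          = β * p.1 * p.2 + (1 - r) * p.2 - p.2 := by linarith
      rw [div_eq_iff hD.ne'] at h2'
      have hzero : ((β * p.1 - r) * (1 + c * p.1 ^ 2) - θ * p.1 ^ 2) * p.2 = 0 := by
        linear_combination -h2'
      have hEq2 : (β * p.1 - r) * (1 + c * p.1 ^ 2) = θ * p.1 ^ 2 := by
        rcases mul_eq_zero.1 hzero with h | h
        · linarith
        · exact absurd h hp2.ne'
      have hΨp : Psi2 β r c p.1 = θ := by
        unfold Psi2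
        rw [div_eq_iff (by positivity : (p.1:ℝ) ^ 2 ≠ 0)]
        exact hEq2
      have : p.1 = u := uniq p.1 ⟨hp1, hp1lt⟩ hΨp u hu hΨ
      rw [Prod.ext_iff]
      exact ⟨this, by rw [hv, this]⟩
    · rintro rfl
      refine ⟨hu0, by simpa using (by linarith : (0:ℝ) < 1 - u), ?_⟩
      unfold V2
      simp only [Prod.mk.injEq]
      constructor
      · ring
      · have hD : (0:ℝ) < 1 + c * u ^ 2 := by positivity
        field_simp
        ring_nf
        nlinarith [hEq]
  refine ⟨⟨u₀, ⟨hu₀01, hu₀⟩, fun u' hu' => uniq u' hu'.1 hu'.2 u₀ hu₀01 hu₀⟩, ?_, key⟩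
  refine ⟨(u₀, 1 - u₀), (key u₀ hu₀01 hu₀ (u₀, 1 - u₀)).mpr rfl, ?_⟩
  intro q hq
  exact (key u₀ hu₀01 hu₀ q).mp hq
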